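/- The KL-divergence penalty of the robust rule on clean data is bounded by the entropy gap: for q* a minimax-robust decision rule over 𝒟 ∋ μ, KL(μ_{Y|X} ‖ q*(·|X) | μ_X) ≤ max_{ν∈𝒟} H_ν(Y|X) − H_μ(Y|X), and in particular this KL divergence is finite. -/

import Mathlib

open scoped BigOperators

variable {𝒳 𝒴 : Type*}

/-- `p` is a probability distribution on `𝒳 × 𝒴`. -/
def IsDist [Fintype 𝒳] [Fintype 𝒴] (p : 𝒳 × 𝒴 → ℝ) : Prop :=
  (∀ a, 0 ≤ p a) ∧ ∑ a, p a = 1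

/-- `q` is a conditional distribution (stochastic matrix) from `𝒳` to `𝒴`. -/
def IsCond [Fintype 𝒴] (q : 𝒳 → 𝒴 → ℝ) : Prop :=
  (∀ x y, 0 ≤ q x y) ∧ ∀ x, ∑ y, q x y = 1

/-- Marginal of `X`. -/
noncomputable def margX [Fintype 𝒴] (p : 𝒳 × 𝒴 → ℝ) (x : 𝒳) : ℝ := ∑ y, p (x, y)

/-- Conditional entropy `H_p(Y|X)` (natural log, `0 log 0 = 0`). -/
noncomputable def condEnt [Fintype 𝒳] [Fintype 𝒴] (p : 𝒳 × 𝒴 → ℝ) : ℝ :=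
  -∑ a, p a * Real.log (p a / margX p a.1)

/-- Expected cross-entropy loss `E_p[-log q(Y|X)]`, valued in `EReal` with value `⊤`
when `q(y|x) = 0` while `p(x,y) > 0`. -/
noncomputable def CEE [Fintype 𝒳] [Fintype 𝒴] (p : 𝒳 × 𝒴 → ℝ) (q : 𝒳 → 𝒴 → ℝ) : EReal :=
  ∑ a, if q a.1 a.2 = 0 ∧ 0 < p a then (⊤ : EReal)
       else ((p a * (-Real.log (q a.1 a.2)) : ℝ) : EReal)

/-- Conditional KL divergence `KL(μ_{Y|X} ‖ q(·|X) | μ_X) = Σ_{x,y} μ(x,y) log(μ(y|x)/q(y|x))`,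
valued in `EReal` with value `⊤` when `q(y|x) = 0` while `μ(x,y) > 0`. -/
noncomputable def condKLE [Fintype 𝒳] [Fintype 𝒴] (μ : 𝒳 × 𝒴 → ℝ) (q : 𝒳 → 𝒴 → ℝ) : EReal :=
  ∑ a, if q a.1 a.2 = 0 ∧ 0 < μ a then (⊤ : EReal)
       else ((μ a * Real.log ((μ a / margX μ a.1) / q a.1 a.2) : ℝ) : EReal)

set_option linter.unusedSectionVars false
set_option linter.unusedVariables false

section Aux

variable [Fintype 𝒳] [Fintype 𝒴]

noncomputable def auxEll (δ : ℝ) (p : 𝒳 × 𝒴 → ℝ) (q : 𝒳 → 𝒴 → ℝ) : ℝ :=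
  ∑ a, p a * (-Real.log (max δ (q a.1 a.2)))

def auxQ (δ : ℝ) : Set (𝒳 → 𝒴 → ℝ) :=
  {q | (∀ x y, q x y ∈ Set.Icc δ 1) ∧ ∀ x, ∑ y, q x y = 1}

lemma margX_nonneg {p : 𝒳 × 𝒴 → ℝ} (hp : ∀ a, 0 ≤ p a) (x : 𝒳) : 0 ≤ margX p x :=
  Finset.sum_nonneg fun y _ => hp (x, y)

lemma le_margX {p : 𝒳 × 𝒴 → ℝ} (hp : ∀ a, 0 ≤ p a) (a : 𝒳 × 𝒴) : p a ≤ margX p a.1 := by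
  have : p (a.1, a.2) ≤ ∑ y, p (a.1, y) :=
    Finset.single_le_sum (fun y _ => hp (a.1, y)) (Finset.mem_univ a.2)
  simpa [margX] using this

lemma margX_total {p : 𝒳 × 𝒴 → ℝ} : ∑ x, margX p x = ∑ a, p a := by
  rw [Fintype.sum_prod_type]; rfl

lemma condEnt_le_card {p : 𝒳 × 𝒴 → ℝ} (hp : IsDist p) :
    condEnt p ≤ (Fintype.card 𝒴 : ℝ) := by
  have h1 : ∀ a : 𝒳 × 𝒴, -(p a * Real.log (p a / margX p a.1)) ≤ margX p a.1 - p a := by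
    intro a
    rcases eq_or_lt_of_le (hp.1 a) with h | h
    · simp [← h, margX_nonneg hp.1 a.1]
    · have hm : 0 < margX p a.1 := lt_of_lt_of_le h (le_margX hp.1 a)
      have hlog : Real.log (margX p a.1 / p a) ≤ margX p a.1 / p a - 1 :=
        Real.log_le_sub_one_of_pos (div_pos hm h)
      have hneg : -Real.log (p a / margX p a.1) = Real.log (margX p a.1 / p a) := by
        rw [← Real.log_inv, inv_div]
      have := mul_le_mul_of_nonneg_left hlog (le_of_lt h)
      rw [mul_sub, mul_one, mul_div_cancel₀ _ (ne_of_gt h)] at this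
      calc -(p a * Real.log (p a / margX p a.1))
          = p a * Real.log (margX p a.1 / p a) := by rw [← hneg]; ring
        _ ≤ margX p a.1 - p a := this
  have h2 : condEnt p ≤ ∑ a : 𝒳 × 𝒴, (margX p a.1 - p a) := by
    rw [condEnt, ← Finset.sum_neg_distrib]
    exact Finset.sum_le_sum fun a _ => h1 a
  have h3 : ∑ a : 𝒳 × 𝒴, (margX p a.1 - p a)
      = (Fintype.card 𝒴 : ℝ) * (∑ x, margX p x) - 1 := by
    rw [Finset.sum_sub_distrib, hp.2]
    congr 1
    rw [Fintype.sum_prod_type]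
    simp [Finset.sum_const, mul_comm, Finset.mul_sum, Finset.sum_mul]
  have h4 : (∑ x, margX p x) = 1 := by rw [margX_total, hp.2]
  rw [h3, h4] at h2
  linarith

variable [Nonempty 𝒴]

noncomputable def smoothq (δ : ℝ) (p : 𝒳 × 𝒴 → ℝ) : 𝒳 → 𝒴 → ℝ := fun x y =>
  (1 - (Fintype.card 𝒴 : ℝ) * δ) *
    (if margX p x = 0 then ((Fintype.card 𝒴 : ℝ))⁻¹ else p (x, y) / margX p x) + δ

lemma Npos : (0 : ℝ) < (Fintype.card 𝒴 : ℝ) := by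
  exact_mod_cast Fintype.card_pos

lemma smoothq_cond_sum (δ : ℝ) (p : 𝒳 × 𝒴 → ℝ) (hp : IsDist p) (x : 𝒳) :
    ∑ y, (if margX p x = 0 then ((Fintype.card 𝒴 : ℝ))⁻¹ else p (x, y) / margX p x) = 1 := by
  by_cases h : margX p x = 0
  · simp [h, Finset.sum_const]
  · simp only [h, if_false]
    rw [← Finset.sum_div]
    rw [show ∑ y, p (x, y) = margX p x from rfl]
    field_simp

lemma smoothq_cond_nonneg (δ : ℝ) (p : 𝒳 × 𝒴 → ℝ) (hp : IsDist p) (x : 𝒳) (y : 𝒴) :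
    0 ≤ (if margX p x = 0 then ((Fintype.card 𝒴 : ℝ))⁻¹ else p (x, y) / margX p x) := by
  by_cases h : margX p x = 0
  · simp [h]
  · have hm : 0 < margX p x := lt_of_le_of_ne (margX_nonneg hp.1 x) (Ne.symm h)
    simp only [h, if_false]
    exact div_nonneg (hp.1 _) hm.le

lemma smoothq_mem {δ : ℝ} (hδ : 0 < δ) (hNδ : (Fintype.card 𝒴 : ℝ) * δ ≤ 1/2)
    {p : 𝒳 × 𝒴 → ℝ} (hp : IsDist p) : smoothq δ p ∈ auxQ δ := by
  have hN1 : (1 : ℝ) ≤ (Fintype.card 𝒴 : ℝ) := by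
    exact_mod_cast Fintype.card_pos (α := 𝒴)
  have hcoef : (0 : ℝ) ≤ 1 - (Fintype.card 𝒴 : ℝ) * δ := by linarith
  constructor
  · intro x y
    constructor
    · have := mul_nonneg hcoef (smoothq_cond_nonneg δ p hp x y)
      simp only [smoothq]
      linarith
    · -- upper bound: cond ≤ 1
      have hc1 : (if margX p x = 0 then ((Fintype.card 𝒴 : ℝ))⁻¹ else p (x, y) / margX p x) ≤ 1 := by
        by_cases h : margX p x = 0
        · simp [h]
          rw [inv_le_one_iff₀]
          right; exact hN1
        · have hm : 0 < margX p x := lt_of_le_of_ne (margX_nonneg hp.1 x) (Ne.symm h)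
          simp only [h, if_false]
          rw [div_le_one hm]
          exact le_margX hp.1 (x, y)
      have := mul_le_mul_of_nonneg_left hc1 hcoef
      simp only [smoothq]
      have hδN : δ ≤ (Fintype.card 𝒴 : ℝ) * δ := by nlinarith
      nlinarith
  · intro x
    simp only [smoothq]
    rw [Finset.sum_add_distrib, ← Finset.mul_sum, smoothq_cond_sum δ p hp x,
      Finset.sum_const]
    simp [nsmul_eq_mul]

lemma smoothq_bound {δ : ℝ} (hδ : 0 < δ) (hNδ : (Fintype.card 𝒴 : ℝ) * δ ≤ 1/2)
    {p : 𝒳 × 𝒴 → ℝ} (hp : IsDist p) :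
    auxEll δ p (smoothq δ p) ≤ condEnt p + (-Real.log (1 - (Fintype.card 𝒴 : ℝ) * δ)) := by
  set N : ℝ := (Fintype.card 𝒴 : ℝ) with hNdef
  set c : ℝ := -Real.log (1 - N * δ) with hcdef
  have hcoef : (0:ℝ) < 1 - N * δ := by linarith
  have hterm : ∀ a : 𝒳 × 𝒴, p a * (-Real.log (max δ (smoothq δ p a.1 a.2)))
      ≤ p a * c + -(p a * Real.log (p a / margX p a.1)) := by
    intro a
    rcases eq_or_lt_of_le (hp.1 a) with h | h
    · rw [← h]; simp
    · have hm : 0 < margX p a.1 := lt_of_lt_of_le h (le_margX hp.1 a)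
      have hmne : margX p a.1 ≠ 0 := ne_of_gt hm
      have hqval : smoothq δ p a.1 a.2 = (1 - N * δ) * (p a / margX p a.1) + δ := by
        simp [smoothq, hmne, hNdef]
      have hqδ : δ ≤ smoothq δ p a.1 a.2 := by
        rw [hqval]
        have : 0 ≤ (1 - N * δ) * (p a / margX p a.1) :=
          mul_nonneg hcoef.le (div_nonneg h.le hm.le)
        linarith
      have hmax : max δ (smoothq δ p a.1 a.2) = smoothq δ p a.1 a.2 := max_eq_right hqδ
      have hlb : (1 - N * δ) * (p a / margX p a.1) ≤ smoothq δ p a.1 a.2 := by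
        rw [hqval]; linarith
      have hlbpos : 0 < (1 - N * δ) * (p a / margX p a.1) :=
        mul_pos hcoef (div_pos h hm)
      have hlog : Real.log ((1 - N * δ) * (p a / margX p a.1)) ≤ Real.log (smoothq δ p a.1 a.2) :=
        Real.log_le_log hlbpos hlb
      have hsplit : Real.log ((1 - N * δ) * (p a / margX p a.1))
          = Real.log (1 - N * δ) + Real.log (p a / margX p a.1) :=
        Real.log_mul (ne_of_gt hcoef) (ne_of_gt (div_pos h hm))
      rw [hmax]
      have : -Real.log (smoothq δ p a.1 a.2) ≤ c + -Real.log (p a / margX p a.1) := by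
        rw [hcdef]; rw [hsplit] at hlog; linarith
      calc p a * (-Real.log (smoothq δ p a.1 a.2))
          ≤ p a * (c + -Real.log (p a / margX p a.1)) :=
            mul_le_mul_of_nonneg_left this h.le
        _ = p a * c + -(p a * Real.log (p a / margX p a.1)) := by ring
  calc auxEll δ p (smoothq δ p)
      ≤ ∑ a, (p a * c + -(p a * Real.log (p a / margX p a.1))) :=
        Finset.sum_le_sum fun a _ => hterm a
    _ = (∑ a, p a) * c + condEnt p := by
        rw [Finset.sum_add_distrib, ← Finset.sum_mul, condEnt, Finset.sum_neg_distrib]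
    _ = condEnt p + c := by rw [hp.2]; ring

lemma uniform_mem {δ : ℝ} (hδ : 0 < δ) (hNδ : (Fintype.card 𝒴 : ℝ) * δ ≤ 1/2) :
    (fun (_ : 𝒳) (_ : 𝒴) => ((Fintype.card 𝒴 : ℝ))⁻¹) ∈ auxQ δ := by
  have hN : (0:ℝ) < (Fintype.card 𝒴 : ℝ) := Npos
  have hN1 : (1 : ℝ) ≤ (Fintype.card 𝒴 : ℝ) := by exact_mod_cast Fintype.card_pos (α := 𝒴)
  refine ⟨fun x y => ⟨?_, ?_⟩, fun x => ?_⟩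
  · rw [show ((Fintype.card 𝒴 : ℝ))⁻¹ = 1 / (Fintype.card 𝒴 : ℝ) from (one_div _).symm,
      le_div_iff₀ hN]
    nlinarith
  · rw [inv_le_one_iff₀]; right; exact hN1
  · simp [Finset.sum_const, nsmul_eq_mul]

lemma apply_continuous (x : 𝒳) (y : 𝒴) : Continuous fun q : 𝒳 → 𝒴 → ℝ => q x y :=
  (continuous_apply y).comp (continuous_apply x)

lemma auxQ_closed {δ : ℝ} : IsClosed (auxQ (𝒳 := 𝒳) (𝒴 := 𝒴) δ) := by
  have : auxQ (𝒳 := 𝒳) (𝒴 := 𝒴) δ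
      = (⋂ x, ⋂ y, {q : 𝒳 → 𝒴 → ℝ | q x y ∈ Set.Icc δ 1})
        ∩ ⋂ x, {q : 𝒳 → 𝒴 → ℝ | ∑ y, q x y = 1} := by
    ext q; simp [auxQ]
  rw [this]
  refine IsClosed.inter (isClosed_iInter fun x => isClosed_iInter fun y => ?_)
    (isClosed_iInter fun x => ?_)
  · exact isClosed_Icc.preimage (apply_continuous x y)
  · exact isClosed_eq (continuous_finset_sum _ fun y _ => apply_continuous x y) continuous_const

lemma auxQ_compact {δ : ℝ} : IsCompact (auxQ (𝒳 := 𝒳) (𝒴 := 𝒴) δ) := by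
  have hbox : IsCompact (Set.pi Set.univ fun _ : 𝒳 => Set.pi Set.univ fun _ : 𝒴 => Set.Icc δ 1) :=
    isCompact_univ_pi fun _ => isCompact_univ_pi fun _ => isCompact_Icc
  apply IsCompact.of_isClosed_subset hbox auxQ_closed
  · intro q hq
    simp only [Set.mem_univ_pi, Set.mem_pi]
    intro x _
    intro y _
    exact hq.1 x y

lemma auxEll_continuous {δ : ℝ} (hδ : 0 < δ) (p : 𝒳 × 𝒴 → ℝ) :
    Continuous fun q : 𝒳 → 𝒴 → ℝ => auxEll δ p q := by
  apply continuous_finset_sum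
  intro a _
  apply Continuous.mul continuous_const
  apply Continuous.neg
  apply Real.continuousOn_log.comp_continuous
    (continuous_const.max (apply_continuous a.1 a.2))
  intro q
  simp only [Set.mem_compl_iff, Set.mem_singleton_iff]
  exact ne_of_gt (lt_of_lt_of_le hδ (le_max_left _ _))

lemma auxEll_convex_comb {δ : ℝ} (hδ : 0 < δ) {p : 𝒳 × 𝒴 → ℝ} (hp : ∀ a, 0 ≤ p a)
    {q q' : 𝒳 → 𝒴 → ℝ} (hq : q ∈ auxQ δ) (hq' : q' ∈ auxQ δ)
    {s t : ℝ} (hs : 0 ≤ s) (ht : 0 ≤ t) (hst : s + t = 1) :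
    (fun x y => s * q x y + t * q' x y) ∈ auxQ δ ∧
    auxEll δ p (fun x y => s * q x y + t * q' x y) ≤ s * auxEll δ p q + t * auxEll δ p q' := by
  constructor
  · refine ⟨fun x y => ⟨?_, ?_⟩, fun x => ?_⟩
    · have h1 := (hq.1 x y).1
      have h2 := (hq'.1 x y).1
      show δ ≤ s * q x y + t * q' x y
      nlinarith
    · have h1 := (hq.1 x y).2
      have h2 := (hq'.1 x y).2
      show s * q x y + t * q' x y ≤ 1
      nlinarith
    · rw [Finset.sum_add_distrib, ← Finset.mul_sum, ← Finset.mul_sum, hq.2 x, hq'.2 x]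
      linarith
  · rw [show s * auxEll δ p q + t * auxEll δ p q'
        = ∑ a, (s * (p a * (-Real.log (max δ (q a.1 a.2))))
              + t * (p a * (-Real.log (max δ (q' a.1 a.2))))) by
      rw [auxEll, auxEll, Finset.sum_add_distrib, Finset.mul_sum, Finset.mul_sum]]
    apply Finset.sum_le_sum
    intro a _
    have hqa := hq.1 a.1 a.2
    have hqa' := hq'.1 a.1 a.2
    have hmix : δ ≤ s * q a.1 a.2 + t * q' a.1 a.2 := by nlinarith [hqa.1, hqa'.1]
    rw [max_eq_right hmix, max_eq_right hqa.1, max_eq_right hqa'.1]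
    have hconc := strictConcaveOn_log_Ioi.concaveOn.2
      (Set.mem_Ioi.mpr (lt_of_lt_of_le hδ hqa.1))
      (Set.mem_Ioi.mpr (lt_of_lt_of_le hδ hqa'.1)) hs ht hst
    simp only [smul_eq_mul] at hconc
    have : -Real.log (s * q a.1 a.2 + t * q' a.1 a.2)
        ≤ s * (-Real.log (q a.1 a.2)) + t * (-Real.log (q' a.1 a.2)) := by linarith
    calc p a * (-Real.log (s * q a.1 a.2 + t * q' a.1 a.2))
        ≤ p a * (s * (-Real.log (q a.1 a.2)) + t * (-Real.log (q' a.1 a.2))) :=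
          mul_le_mul_of_nonneg_left this (hp a)
      _ = s * (p a * (-Real.log (q a.1 a.2))) + t * (p a * (-Real.log (q' a.1 a.2))) := by ring

lemma finite_family_good {𝒟 : Set (𝒳 × 𝒴 → ℝ)} (h𝒟 : ∀ p ∈ 𝒟, IsDist p)
    (hconv : Convex ℝ 𝒟) {Hs : ℝ} (hHs : ∀ p ∈ 𝒟, condEnt p ≤ Hs)
    {δ : ℝ} (hδ : 0 < δ) (hNδ : (Fintype.card 𝒴 : ℝ) * δ ≤ 1/2)
    {ι : Type*} [Fintype ι] (ν : ι → (𝒳 × 𝒴 → ℝ)) (hν : ∀ i, ν i ∈ 𝒟) :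
    ∃ q ∈ auxQ (𝒳 := 𝒳) (𝒴 := 𝒴) δ, ∀ i, auxEll δ (ν i) q
      ≤ Hs + 2 * (-Real.log (1 - (Fintype.card 𝒴 : ℝ) * δ)) := by
  classical
  set N : ℝ := (Fintype.card 𝒴 : ℝ) with hNdef
  set c : ℝ := -Real.log (1 - N * δ) with hc
  have hN1 : (1:ℝ) ≤ N := by rw [hNdef]; exact_mod_cast Fintype.card_pos (α := 𝒴)
  have h1N : 0 < 1 - N * δ := by linarith
  have hcpos : 0 < c := by
    have h2 : 1 - N * δ < 1 := by nlinarith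
    have := Real.log_neg h1N h2
    rw [hc]; linarith
  set B : ℝ := Hs + 2 * c with hB
  by_contra hcon
  push_neg at hcon
  set q0 : 𝒳 → 𝒴 → ℝ := fun _ _ => (N)⁻¹ with hq0def
  have hq0 : q0 ∈ auxQ δ := uniform_mem hδ hNδ
  obtain ⟨i0, _⟩ := hcon q0 hq0
  haveI : Nonempty ι := ⟨i0⟩
  set S : Set (ι → ℝ) := {z | ∃ q ∈ auxQ (𝒳 := 𝒳) (𝒴 := 𝒴) δ, ∀ i, auxEll δ (ν i) q ≤ z i}
    with hSdef
  set T : Set (ι → ℝ) := {z | ∀ i, z i < B} with hTdef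
  have hTopen : IsOpen T := by
    have : T = ⋂ i, {z : ι → ℝ | z i < B} := by ext z; simp [hTdef]
    rw [this]
    exact isOpen_iInter_of_finite fun i =>
      isOpen_lt (continuous_apply i) continuous_const
  have hTconv : Convex ℝ T := by
    have : T = ⋂ i, {z : ι → ℝ | z i < B} := by ext z; simp [hTdef]
    rw [this]
    exact convex_iInter fun i =>
      convex_halfSpace_lt ⟨fun a b => rfl, fun r a => rfl⟩ B
  have hSconv : Convex ℝ S := by
    rintro z ⟨q, hqQ, hqz⟩ z' ⟨q', hq'Q, hq'z⟩ s t hs ht hst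
    refine ⟨fun x y => s * q x y + t * q' x y,
      (auxEll_convex_comb hδ (h𝒟 _ (hν i0)).1 hqQ hq'Q hs ht hst).1, fun i => ?_⟩
    have h2 := (auxEll_convex_comb hδ (h𝒟 _ (hν i)).1 hqQ hq'Q hs ht hst).2
    have h3 : s * auxEll δ (ν i) q + t * auxEll δ (ν i) q' ≤ s * z i + t * z' i :=
      add_le_add (mul_le_mul_of_nonneg_left (hqz i) hs)
        (mul_le_mul_of_nonneg_left (hq'z i) ht)
    have : (s • z + t • z') i = s * z i + t * z' i := by
      simp [Pi.add_apply, Pi.smul_apply, smul_eq_mul]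
    rw [this]
    exact le_trans h2 h3
  have hdisj : Disjoint T S := by
    rw [Set.disjoint_left]
    rintro z hzT ⟨q, hqQ, hqz⟩
    obtain ⟨i, hi⟩ := hcon q hqQ
    exact absurd ((hi.trans_le (hqz i)).trans (hzT i)) (lt_irrefl B)
  obtain ⟨φ, u, hTu, hSu⟩ := geometric_hahn_banach_open hTconv hTopen hSconv hdisj
  set g : ι → (ι → ℝ) := fun i => fun j => if i = j then (1:ℝ) else 0 with hgdef
  set cf : ι → ℝ := fun i => φ (g i) with hcfdef
  have hφ : ∀ z : ι → ℝ, φ z = ∑ i, z i * cf i := by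
    intro z
    conv_lhs => rw [pi_eq_sum_univ z, map_sum]
    congr 1
    ext i
    rw [map_smul]
    simp [hcfdef, hgdef, smul_eq_mul]
  set z0 : ι → ℝ := fun i => auxEll δ (ν i) q0 with hz0def
  have hz0 : z0 ∈ S := ⟨q0, hq0, fun i => le_refl _⟩
  have hu0 : u ≤ φ z0 := hSu z0 hz0
  have hcf : ∀ i, 0 ≤ cf i := by
    intro i
    by_contra hneg
    push_neg at hneg
    set t : ℝ := (u - φ z0 - 1) / cf i with htdef
    have ht : 0 ≤ t := by
      apply div_nonneg_of_nonpos (by linarith) hneg.le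
    have hz0t : z0 + t • g i ∈ S := by
      refine ⟨q0, hq0, fun j => ?_⟩
      have : (z0 + t • g i) j = z0 j + t * (if i = j then (1:ℝ) else 0) := by
        simp [hgdef, Pi.add_apply, Pi.smul_apply, smul_eq_mul]
      rw [this]
      by_cases hij : i = j
      · simp [hij]; linarith [le_refl (z0 j)]
      · simp [hij]; exact le_rfl
    have h1 : u ≤ φ z0 + t * cf i := by
      have h0 := hSu _ hz0t
      rw [map_add, map_smul, smul_eq_mul] at h0
      simpa [hcfdef] using h0
    have h2 : t * cf i = u - φ z0 - 1 := div_mul_cancel₀ _ (ne_of_lt hneg)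
    linarith
  set σ : ℝ := ∑ i, cf i with hσdef
  have hσ0 : 0 ≤ σ := Finset.sum_nonneg fun i _ => hcf i
  have hφconst : ∀ r : ℝ, φ (fun _ => r) = r * σ := by
    intro r
    rw [hφ, hσdef, Finset.mul_sum]
  have hσpos : 0 < σ := by
    rcases eq_or_lt_of_le hσ0 with h | h
    · exfalso
      have hall : ∀ i ∈ Finset.univ, cf i = 0 :=
        (Finset.sum_eq_zero_iff_of_nonneg (fun i _ => hcf i)).1 h.symm
      have hz00 : φ z0 = 0 := by
        rw [hφ]
        apply Finset.sum_eq_zero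
        intro i hi
        rw [hall i hi, mul_zero]
      have hTz : (fun _ : ι => B - 1) ∈ T := by
        intro i
        show B - 1 < B
        linarith
      have h3 := hTu _ hTz
      rw [hφconst, ← h] at h3
      simp at h3
      linarith
    · exact h
  have hBσ : B * σ ≤ u := by
    by_contra hlt
    push_neg at hlt
    set ε : ℝ := (B * σ - u) / σ with hεdef
    have hε : 0 < ε := div_pos (by linarith) hσpos
    have hmem : (fun _ : ι => B - ε) ∈ T := by
      intro i
      show B - ε < B
      linarith
    have h3 := hTu _ hmem
    rw [hφconst] at h3
    have h4 : (B - ε) * σ = u := by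
      rw [hεdef]
      field_simp
      ring
    linarith
  set w : ι → ℝ := fun i => cf i / σ with hwdef
  have hw1 : ∑ i, w i = 1 := by
    rw [hwdef]
    simp only []
    rw [← Finset.sum_div, ← hσdef]
    field_simp
  set nb : 𝒳 × 𝒴 → ℝ := ∑ i, w i • ν i with hnbdef
  have hnb𝒟 : nb ∈ 𝒟 :=
    hconv.sum_mem (fun i _ => div_nonneg (hcf i) hσ0) hw1 (fun i _ => hν i)
  have hnbdist := h𝒟 _ hnb𝒟
  have hkey : B ≤ auxEll δ nb (smoothq δ nb) := by
    have hqQ := smoothq_mem hδ hNδ hnbdist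
    set q : 𝒳 → 𝒴 → ℝ := smoothq δ nb with hqdef
    have hzq : (fun i => auxEll δ (ν i) q) ∈ S := ⟨q, hqQ, fun i => le_refl _⟩
    have h1 : u ≤ ∑ i, auxEll δ (ν i) q * cf i := by
      have := hSu _ hzq
      rwa [hφ] at this
    have hlin : auxEll δ nb q = ∑ i, w i * auxEll δ (ν i) q := by
      rw [auxEll]
      have hnba : ∀ a, nb a = ∑ i, w i * ν i a := by
        intro a
        rw [hnbdef]
        simp [Finset.sum_apply, Pi.smul_apply, smul_eq_mul]
      calc ∑ a, nb a * (-Real.log (max δ (q a.1 a.2)))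
          = ∑ a, ∑ i, w i * (ν i a * (-Real.log (max δ (q a.1 a.2)))) := by
            apply Finset.sum_congr rfl
            intro a _
            rw [hnba a, Finset.sum_mul]
            apply Finset.sum_congr rfl
            intro i _
            ring
        _ = ∑ i, w i * auxEll δ (ν i) q := by
            rw [Finset.sum_comm]
            apply Finset.sum_congr rfl
            intro i _
            rw [auxEll, Finset.mul_sum]
    rw [hlin]
    have h2 : ∑ i, w i * auxEll δ (ν i) q = (∑ i, auxEll δ (ν i) q * cf i) / σ := by
      rw [Finset.sum_div]
      apply Finset.sum_congr rfl
      intro i _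
      rw [hwdef]
      field_simp
    rw [h2, le_div_iff₀ hσpos]
    linarith
  have hup := smoothq_bound hδ hNδ hnbdist
  have hent := hHs nb hnb𝒟
  rw [← hNdef, ← hc] at hup
  rw [hB] at hkey
  linarith

lemma exists_uniform_good {𝒟 : Set (𝒳 × 𝒴 → ℝ)} (h𝒟 : ∀ p ∈ 𝒟, IsDist p)
    (hconv : Convex ℝ 𝒟) {Hs : ℝ} (hHs : ∀ p ∈ 𝒟, condEnt p ≤ Hs)
    {δ : ℝ} (hδ : 0 < δ) (hNδ : (Fintype.card 𝒴 : ℝ) * δ ≤ 1/2) :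
    ∃ q ∈ auxQ (𝒳 := 𝒳) (𝒴 := 𝒴) δ, ∀ p ∈ 𝒟, auxEll δ p q
      ≤ Hs + 2 * (-Real.log (1 - (Fintype.card 𝒴 : ℝ) * δ)) := by
  classical
  set B : ℝ := Hs + 2 * (-Real.log (1 - (Fintype.card 𝒴 : ℝ) * δ)) with hB
  set Z : 𝒟 → Set (𝒳 → 𝒴 → ℝ) := fun νn => {q | auxEll δ νn.1 q ≤ B} with hZ
  have hZc : ∀ νn : 𝒟, IsClosed (Z νn) := fun νn =>
    isClosed_le (auxEll_continuous hδ _) continuous_const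
  by_contra hcon
  push_neg at hcon
  have hempty : auxQ (𝒳 := 𝒳) (𝒴 := 𝒴) δ ∩ ⋂ νn : 𝒟, Z νn = ∅ := by
    rw [Set.eq_empty_iff_forall_notMem]
    rintro q ⟨hqQ, hqZ⟩
    obtain ⟨p, hp, hlt⟩ := hcon q hqQ
    rw [Set.mem_iInter] at hqZ
    exact absurd (hqZ ⟨p, hp⟩) (not_le.mpr hlt)
  obtain ⟨t, ht⟩ := auxQ_compact.elim_finite_subfamily_closed Z hZc hempty
  obtain ⟨q, hqQ, hq⟩ := finite_family_good h𝒟 hconv hHs hδ hNδ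
    (ι := {νn : 𝒟 // νn ∈ t}) (fun i => i.1.1) (fun i => i.1.2)
  have hmem : q ∈ auxQ (𝒳 := 𝒳) (𝒴 := 𝒴) δ ∩ ⋂ νn ∈ t, Z νn := by
    refine ⟨hqQ, ?_⟩
    rw [Set.mem_iInter₂]
    intro νn hνn
    exact hq ⟨νn, hνn⟩
  rw [ht] at hmem
  exact hmem

end Aux

section Aux2

variable [Fintype 𝒳] [Fintype 𝒴]

lemma ereal_sum_coe {α : Type*} (s : Finset α) (f : α → ℝ) :
    (∑ a ∈ s, ((f a : ℝ) : EReal)) = ((∑ a ∈ s, f a : ℝ) : EReal) := by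
  induction s using Finset.cons_induction with
  | empty => simp
  | cons a s ha ih => rw [Finset.sum_cons, Finset.sum_cons, ih, EReal.coe_add]

lemma ereal_sum_ne_bot {α : Type*} (s : Finset α) (f : α → EReal)
    (h : ∀ a ∈ s, f a ≠ ⊥) : (∑ a ∈ s, f a) ≠ ⊥ := by
  induction s using Finset.cons_induction with
  | empty => simp
  | cons a s ha ih =>
      rw [Finset.sum_cons]
      rw [Ne, EReal.add_eq_bot_iff]
      push_neg
      exact ⟨h a (Finset.mem_cons_self a s), ih fun b hb => h b (Finset.mem_cons_of_mem hb)⟩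

lemma CEE_eq_auxEll {δ : ℝ} (hδ : 0 < δ) {q : 𝒳 → 𝒴 → ℝ} (hq : q ∈ auxQ δ)
    (p : 𝒳 × 𝒴 → ℝ) : CEE p q = ((auxEll δ p q : ℝ) : EReal) := by
  rw [CEE, auxEll, ← ereal_sum_coe]
  apply Finset.sum_congr rfl
  intro a _
  have hpos : 0 < q a.1 a.2 := lt_of_lt_of_le hδ (hq.1 a.1 a.2).1
  rw [if_neg (by rintro ⟨h0, _⟩; exact absurd h0 (ne_of_gt hpos)),
    max_eq_right (hq.1 a.1 a.2).1]

lemma CEE_eq_ent_add_KL {p : 𝒳 × 𝒴 → ℝ} (hp : IsDist p) {q : 𝒳 → 𝒴 → ℝ}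
    (hq : ∀ x y, 0 ≤ q x y) :
    CEE p q = ((condEnt p : ℝ) : EReal) + condKLE p q := by
  have hent : ((condEnt p : ℝ) : EReal)
      = ∑ a : 𝒳 × 𝒴, ((-(p a * Real.log (p a / margX p a.1)) : ℝ) : EReal) := by
    rw [ereal_sum_coe, condEnt, Finset.sum_neg_distrib]
  rw [hent, CEE, condKLE, ← Finset.sum_add_distrib]
  apply Finset.sum_congr rfl
  intro a _
  by_cases h : q a.1 a.2 = 0 ∧ 0 < p a
  · rw [if_pos h, if_pos h, EReal.coe_add_top]
  · rw [if_neg h, if_neg h, ← EReal.coe_add, EReal.coe_eq_coe_iff]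
    rcases eq_or_lt_of_le (hp.1 a) with h0 | h0
    · rw [← h0]; ring
    · have hqpos : 0 < q a.1 a.2 :=
        lt_of_le_of_ne (hq a.1 a.2) fun hc => h ⟨hc.symm, h0⟩
      have hm : 0 < margX p a.1 := lt_of_lt_of_le h0 (le_margX hp.1 a)
      rw [Real.log_div (ne_of_gt (div_pos h0 hm)) (ne_of_gt hqpos)]
      ring

end Aux2

/-- the KL-divergence penalty of a minimax-robust rule `q*` on the clean
distribution `μ ∈ 𝒟` is bounded by the entropy gap
`max_{ν∈𝒟} H_ν(Y|X) − H_μ(Y|X)`; in particular it is finite. -/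
theorem robust_rule_KL_penalty_bounded [Fintype 𝒳] [Fintype 𝒴]
    (𝒟 : Set (𝒳 × 𝒴 → ℝ)) (h𝒟 : ∀ p ∈ 𝒟, IsDist p)
    (hclosed : IsClosed 𝒟) (hconv : Convex ℝ 𝒟)
    (μ : 𝒳 × 𝒴 → ℝ) (hμ : μ ∈ 𝒟)
    (qstar : 𝒳 → 𝒴 → ℝ) (hq : IsCond qstar)
    (hmin : ∀ q : 𝒳 → 𝒴 → ℝ, IsCond q →
      (⨆ ν : 𝒟, CEE ν.1 qstar) ≤ ⨆ ν : 𝒟, CEE ν.1 q) :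
    condKLE μ qstar ≤ (⨆ ν : 𝒟, ((condEnt ν.1 : ℝ) : EReal)) - ((condEnt μ : ℝ) : EReal) ∧
    condKLE μ qstar < ⊤ := by
  classical
  have hμd := h𝒟 μ hμ
  haveI hYne : Nonempty 𝒴 := by
    by_contra h
    rw [not_nonempty_iff] at h
    have h0 : (∑ a : 𝒳 × 𝒴, μ a) = 0 :=
      Finset.sum_eq_zero fun a _ => (h.false a.2).elim
    rw [hμd.2] at h0
    norm_num at h0
  set N : ℝ := (Fintype.card 𝒴 : ℝ) with hNdef
  have hN : (0:ℝ) < N := by rw [hNdef]; exact_mod_cast Fintype.card_pos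
  set Hs : ℝ := sSup (condEnt '' 𝒟) with hHsdef
  have hbdd : BddAbove (condEnt '' 𝒟) := by
    refine ⟨(Fintype.card 𝒴 : ℝ), ?_⟩
    rintro r ⟨p, hp, rfl⟩
    exact condEnt_le_card (h𝒟 p hp)
  have hHsle : ∀ p ∈ 𝒟, condEnt p ≤ Hs := fun p hp => le_csSup hbdd ⟨p, hp, rfl⟩
  have key1 : ∀ ε : ℝ, 0 < ε → CEE μ qstar ≤ ((Hs + ε : ℝ) : EReal) := by
    intro ε hε
    have hexp : Real.exp (-(ε/2)) < 1 := Real.exp_lt_one_iff.mpr (by linarith)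
    set δ : ℝ := min (1/(2*N)) ((1 - Real.exp (-(ε/2)))/N) with hδdef
    have hδpos : 0 < δ := by
      apply lt_min
      · positivity
      · apply div_pos _ hN
        linarith
    have hNδ : N * δ ≤ 1/2 := by
      have h1 : δ ≤ 1/(2*N) := min_le_left _ _
      calc N * δ ≤ N * (1/(2*N)) := by nlinarith
        _ = 1/2 := by field_simp
    have hcsm : -Real.log (1 - N * δ) ≤ ε/2 := by
      have h1 : N * δ ≤ 1 - Real.exp (-(ε/2)) := by
        have h2 : δ ≤ (1 - Real.exp (-(ε/2)))/N := min_le_right _ _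
        calc N * δ ≤ N * ((1 - Real.exp (-(ε/2)))/N) := by nlinarith
          _ = 1 - Real.exp (-(ε/2)) := by field_simp
      have h2 : Real.exp (-(ε/2)) ≤ 1 - N * δ := by linarith
      have h3 := Real.log_le_log (Real.exp_pos _) h2
      rw [Real.log_exp] at h3
      linarith
    obtain ⟨qδ, hqQ, hqgood⟩ := exists_uniform_good h𝒟 hconv hHsle hδpos hNδ
    have hcond : IsCond qδ := ⟨fun x y => le_trans hδpos.le (hqQ.1 x y).1, hqQ.2⟩
    have h1 : CEE μ qstar ≤ ⨆ ν : 𝒟, CEE ν.1 qstar :=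
      le_iSup (fun ν : 𝒟 => CEE ν.1 qstar) ⟨μ, hμ⟩
    have h2 := hmin qδ hcond
    have h3 : (⨆ ν : 𝒟, CEE ν.1 qδ) ≤ ((Hs + ε : ℝ) : EReal) := by
      apply iSup_le
      rintro ⟨p, hp⟩
      rw [CEE_eq_auxEll hδpos hqQ p]
      have h4 := hqgood p hp
      have h5 : auxEll δ p qδ ≤ Hs + ε := by
        rw [← hNdef] at h4
        linarith
      exact_mod_cast h5
    exact le_trans h1 (le_trans h2 h3)
  have key2 : CEE μ qstar ≤ ((Hs : ℝ) : EReal) := by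
    have hne : CEE μ qstar ≠ ⊤ := by
      intro h
      have h1 := key1 1 one_pos
      rw [h] at h1
      exact (EReal.coe_lt_top (Hs + 1)).not_ge h1
    by_cases hb : CEE μ qstar = ⊥
    · rw [hb]; exact bot_le
    · obtain ⟨r, hr⟩ : ∃ r : ℝ, CEE μ qstar = (r : EReal) :=
        ⟨_, (EReal.coe_toReal hne hb).symm⟩
      rw [hr, EReal.coe_le_coe_iff]
      by_contra hlt
      push_neg at hlt
      have h1 := key1 ((r - Hs)/2) (by linarith)
      rw [hr, EReal.coe_le_coe_iff] at h1
      linarith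
  have hid := CEE_eq_ent_add_KL hμd hq.1 (q := qstar)
  have hKLnb : condKLE μ qstar ≠ ⊥ := by
    rw [condKLE]
    apply ereal_sum_ne_bot
    intro a _
    by_cases h : qstar a.1 a.2 = 0 ∧ 0 < μ a
    · rw [if_pos h]; simp
    · rw [if_neg h]; exact EReal.coe_ne_bot _
  have hKLnt : condKLE μ qstar ≠ ⊤ := by
    intro h
    rw [hid, h, EReal.coe_add_top] at key2
    exact (EReal.coe_lt_top Hs).not_ge key2
  set k : ℝ := (condKLE μ qstar).toReal with hk
  have hKL : condKLE μ qstar = (k : EReal) := (EReal.coe_toReal hKLnt hKLnb).symm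
  have hreal : condEnt μ + k ≤ Hs := by
    rw [hid, hKL, ← EReal.coe_add, EReal.coe_le_coe_iff] at key2
    exact key2
  have hHsB : ((Hs : ℝ) : EReal) ≤ ⨆ ν : 𝒟, ((condEnt ν.1 : ℝ) : EReal) := by
    set Bo := ⨆ ν : 𝒟, ((condEnt ν.1 : ℝ) : EReal) with hBo
    by_contra hlt
    push_neg at hlt
    have hBle : ((condEnt μ : ℝ) : EReal) ≤ Bo :=
      le_iSup (fun ν : 𝒟 => ((condEnt ν.1 : ℝ) : EReal)) ⟨μ, hμ⟩
    have hBnb : Bo ≠ ⊥ := by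
      intro h
      rw [h, le_bot_iff] at hBle
      exact EReal.coe_ne_bot _ hBle
    have hBnt : Bo ≠ ⊤ := (hlt.trans (EReal.coe_lt_top _)).ne
    have hBo2 : Bo = ((Bo.toReal : ℝ) : EReal) := (EReal.coe_toReal hBnt hBnb).symm
    rw [hBo2, EReal.coe_lt_coe_iff] at hlt
    obtain ⟨r, hrmem, hbr⟩ :=
      exists_lt_of_lt_csSup (Set.Nonempty.image _ ⟨μ, hμ⟩) hlt
    obtain ⟨p, hp, rfl⟩ := hrmem
    have h2 : ((condEnt p : ℝ) : EReal) ≤ Bo :=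
      le_iSup (fun ν : 𝒟 => ((condEnt ν.1 : ℝ) : EReal)) ⟨p, hp⟩
    rw [hBo2, EReal.coe_le_coe_iff] at h2
    linarith
  constructor
  · rw [hKL]
    calc ((k : ℝ) : EReal) ≤ ((Hs - condEnt μ : ℝ) : EReal) := by
          have : k ≤ Hs - condEnt μ := by linarith
          exact_mod_cast this
      _ = ((Hs : ℝ) : EReal) - ((condEnt μ : ℝ) : EReal) := by rw [EReal.coe_sub]
      _ ≤ _ := EReal.sub_le_sub hHsB (le_refl _)
  · rw [hKL]
    exact EReal.coe_lt_top k
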